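/- Suppose y_k ∈ E(A) for k = 0,…,m−1. Then the function y(z) = Σ_{k=0}^{m−1} F_k(z;A) y_k = Σ_{k=0}^{m−1} Σ_{n≥0} z^{mn+k} A^n y_k/(mn+k)! is a solution in 𝔄_loc(𝔅) of the Cauchy problem y^{(m)}(z) = A y(z), y^{(k)}(0) = y_k (k = 0,…,m−1): the series converges for |z|_p < r where r = σ^{−1/m} p^{−1/(p−1)} and σ = max_k σ(y_k;A) (with r = ∞ if σ = 0), y(z) ∈ 𝒟(A) there, y^{(m)}(z) = A y(z) for |z|_p < r, and y^{(k)}(0) = y_k. -/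

import Mathlib

open Filter Topology ENNReal

section PSer
variable (K : Type*) [NontriviallyNormedField K]
  {B : Type*} [NormedAddCommGroup B] [NormedSpace K B]

/-- The one-dimensional formal power series with coefficients `c`. -/
noncomputable def pser (c : ℕ → B) : FormalMultilinearSeries K K B :=
  fun n => ContinuousMultilinearMap.mkPiRing K (Fin n) (c n)

variable {K}

lemma pser_apply (c : ℕ → B) (n : ℕ) (w : K) :
    (pser K c n) (fun _ => w) = w ^ n • c n := by
  simp [pser, ContinuousMultilinearMap.mkPiRing_apply]

lemma pser_norm (c : ℕ → B) (n : ℕ) : ‖pser K c n‖ = ‖c n‖ :=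
  ContinuousMultilinearMap.norm_mkPiRing _

lemma eq_pser_of_coeff {q : FormalMultilinearSeries K K B} {c : ℕ → B}
    (h : ∀ n, (q n) (fun _ => (1 : K)) = c n) : q = pser K c := by
  funext n
  have h1 : ContinuousMultilinearMap.mkPiRing K (Fin n) (q.coeff n) = q n :=
    FormalMultilinearSeries.mkPiRing_coeff_eq q n
  have h2 : q.coeff n = c n := h n
  rw [← h1, h2]; rfl

lemma pser_hasSum [CompleteSpace B] {f : K → B} {c : ℕ → B} {r : ℝ≥0∞}
    (h : HasFPowerSeriesOnBall f (pser K c) 0 r) {z : K} (hz : (‖z‖₊ : ℝ≥0∞) < r) :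
    HasSum (fun n : ℕ => z ^ n • c n) (f z) := by
  have hb : z ∈ Metric.eball (0 : K) r := by
    rw [Metric.mem_eball, edist_eq_enorm_sub, sub_zero, enorm_eq_nnnorm]; exact hz
  have h2 := h.hasSum hb
  rw [zero_add] at h2
  simpa only [pser_apply] using h2

lemma pser_deriv [CompleteSpace B] {f : K → B} {c : ℕ → B} {r : ℝ≥0∞}
    (h : HasFPowerSeriesOnBall f (pser K c) 0 r) :
    HasFPowerSeriesOnBall (deriv f) (pser K (fun n => (n + 1) • c (n + 1))) 0 r := by
  have h2 := (ContinuousLinearMap.apply K B (1 : K)).comp_hasFPowerSeriesOnBall h.fderiv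
  have heq : (⇑(ContinuousLinearMap.apply K B (1 : K)) ∘ fderiv K f) = deriv f := by
    funext w
    simp only [Function.comp_apply, ContinuousLinearMap.apply_apply, fderiv_apply_one_eq_deriv]
  rw [heq] at h2
  have hser : (ContinuousLinearMap.apply K B (1 : K)).compFormalMultilinearSeries
      (pser K c).derivSeries = pser K (fun n => (n + 1) • c (n + 1)) := by
    apply eq_pser_of_coeff
    intro n
    simp only [ContinuousLinearMap.compFormalMultilinearSeries_apply,
      ContinuousLinearMap.compContinuousMultilinearMap_coe, Function.comp_apply,
      ContinuousLinearMap.apply_apply]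
    rw [FormalMultilinearSeries.derivSeries_apply_diag, pser_apply, one_pow, one_smul]
  rw [hser] at h2
  exact h2

lemma pser_iter_deriv [CompleteSpace B] {f : K → B} {c : ℕ → B} {r : ℝ≥0∞}
    (h : HasFPowerSeriesOnBall f (pser K c) 0 r) :
    ∀ i : ℕ, HasFPowerSeriesOnBall (deriv^[i] f)
      (pser K (fun n => ((n + i).descFactorial i) • c (n + i))) 0 r := by
  intro i
  induction i with
  | zero => simpa using h
  | succ i ih =>
    have h1 := pser_deriv ih
    rw [Function.iterate_succ_apply']
    have : (fun n => (n + 1) • ((n + 1 + i).descFactorial i) • c (n + 1 + i))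
        = (fun n => ((n + (i + 1)).descFactorial (i + 1)) • c (n + (i + 1))) := by
      funext n
      have he : n + (i + 1) = n + 1 + i := by omega
      rw [he, Nat.descFactorial_succ, Nat.add_sub_cancel, mul_smul]
    rw [← this]
    exact h1

end PSer

theorem solution_exists_of_initial_data_in_EA
    {p : ℕ} [Fact p.Prime]
    {K : Type*} [NontriviallyNormedField K] [CompleteSpace K] [IsAlgClosed K]
    [IsUltrametricDist K] [Algebra ℚ_[p] K]
    (hK : ∀ q : ℚ_[p], ‖algebraMap ℚ_[p] K q‖ = ‖q‖)
    {B : Type*} [NormedAddCommGroup B] [NormedSpace K B] [CompleteSpace B]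
    [IsUltrametricDist B]
    (D : Submodule K B) (A : B →ₗ[K] B)
    (hA : IsClosed {q : B × B | q.1 ∈ D ∧ A q.1 = q.2})
    (m : ℕ) (hm : 1 ≤ m) (yinit : ℕ → B)
    -- each initial datum belongs to E(A)
    (hE : ∀ k < m, (∀ n : ℕ, (⇑A)^[n] (yinit k) ∈ D) ∧
      ∃ α > (0 : ℝ), ∃ C > (0 : ℝ), ∀ n : ℕ, ‖(⇑A)^[n] (yinit k)‖ ≤ C * α ^ n)
    -- σ = max_k σ(y_k; A)
    (σ : ℝ)
    (hσ : σ = (Finset.range m).sup' (Finset.nonempty_range_iff.mpr (by omega))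
      fun k => Filter.limsup (fun n : ℕ => ‖(⇑A)^[n] (yinit k)‖ ^ (1 / (n : ℝ))) atTop)
    -- the combined coefficients of y(z) = Σ_{k<m} Σ_n z^{mn+k} Aⁿ y_k/(mn+k)!
    (c : ℕ → B)
    (hc : ∀ (n : ℕ), ∀ k < m,
      c (m * n + k) = ((m * n + k).factorial : K)⁻¹ • (⇑A)^[n] (yinit k))
    (y : K → B) (hy : ∀ z : K, y z = ∑' j : ℕ, z ^ j • c j) :
    -- the series (and each F_k-series) converges on the disk, y takes values in 𝒟(A),
    -- satisfies y⁽ᵐ⁾ = A y there, and has the prescribed initial data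
    (∀ z : K, (σ = 0 ∨ ‖z‖ < σ ^ (-(1 : ℝ) / (m : ℝ)) * (p : ℝ) ^ (-(1 : ℝ) / ((p : ℝ) - 1))) →
      Summable (fun j : ℕ => z ^ j • c j) ∧
      (∀ k < m, Summable (fun n : ℕ =>
        ((m * n + k).factorial : K)⁻¹ • z ^ (m * n + k) • (⇑A)^[n] (yinit k))) ∧
      y z ∈ D ∧
      iteratedDeriv m y z = A (y z)) ∧
    (∀ k < m, iteratedDeriv k y 0 = yinit k) := by
  have hm0 : 0 < m := hm
  have hp2 : 2 ≤ p := (Fact.out : p.Prime).two_le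
  have hppos : (0 : ℝ) < p := by positivity
  have hp1R : (1 : ℝ) ≤ p := by exact_mod_cast Nat.one_le_of_lt hp2
  have hp1' : (0 : ℝ) < (p : ℝ) - 1 := by
    have : (2 : ℝ) ≤ p := by exact_mod_cast hp2
    linarith
  set u : ℝ := (p : ℝ) ^ ((1 : ℝ) / ((p : ℝ) - 1)) with hu_def
  have hu1 : 1 ≤ u := Real.one_le_rpow hp1R (by positivity)
  have hu0 : 0 < u := lt_of_lt_of_le one_pos hu1
  have hKinj : Function.Injective (algebraMap ℚ_[p] K) := (algebraMap ℚ_[p] K).injective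
  have hcharK : CharZero K := charZero_of_injective_algebraMap hKinj
  -- p-adic factorial norm bound
  have hfac : ∀ j : ℕ, ‖((j.factorial : K))⁻¹‖ ≤ u ^ j := by
    intro j
    have hfK : ((j.factorial : ℕ) : K) = algebraMap ℚ_[p] K ((j.factorial : ℕ) : ℚ_[p]) :=
      (map_natCast (algebraMap ℚ_[p] K) _).symm
    have hf0 : ((j.factorial : ℕ) : ℚ_[p]) ≠ 0 := Nat.cast_ne_zero.mpr j.factorial_ne_zero
    have hnorm : ‖((j.factorial : ℕ) : K)‖ = (p : ℝ) ^ (-(padicValNat p j.factorial : ℤ)) := by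
      rw [hfK, hK, Padic.norm_eq_zpow_neg_valuation hf0, Padic.valuation_natCast]
    rw [norm_inv, hnorm, ← zpow_neg, neg_neg]
    have hcast : ((p : ℝ)) ^ ((padicValNat p j.factorial : ℕ) : ℤ)
        = (p : ℝ) ^ ((padicValNat p j.factorial : ℕ) : ℝ) := by
      rw [← Real.rpow_intCast]
      norm_num
    rw [hcast]
    have huj : u ^ j = (p : ℝ) ^ ((j : ℝ) * ((p : ℝ) - 1)⁻¹) := by
      rw [hu_def, ← Real.rpow_natCast ((p:ℝ) ^ ((1:ℝ)/((p:ℝ)-1))) j,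
        ← Real.rpow_mul hppos.le]
      ring_nf
    rw [huj]
    apply Real.rpow_le_rpow_of_exponent_le hp1R
    rw [← div_eq_mul_inv, le_div_iff₀ hp1']
    have h1 : (p - 1) * padicValNat p (j.factorial) ≤ j := by
      rw [sub_one_mul_padicValNat_factorial]
      exact Nat.sub_le _ _
    have h2 : ((p - 1 : ℕ) : ℝ) = (p : ℝ) - 1 := by
      have : 1 ≤ p := by omega
      push_cast [Nat.cast_sub this]
      ring
    calc (padicValNat p j.factorial : ℝ) * ((p : ℝ) - 1)
        = (((p - 1) * padicValNat p j.factorial : ℕ) : ℝ) := by rw [← h2]; push_cast; ring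
      _ ≤ (j : ℝ) := by exact_mod_cast h1
  -- uniform coefficient formula
  have hcj : ∀ j : ℕ, c j = ((j.factorial : K))⁻¹ • (⇑A)^[j / m] (yinit (j % m)) := by
    intro j
    have h1 := hc (j / m) (j % m) (Nat.mod_lt _ hm0)
    rwa [Nat.div_add_mod] at h1
  have hcD : ∀ j : ℕ, c j ∈ D := by
    intro j
    rw [hcj j]
    exact D.smul_mem _ ((hE _ (Nat.mod_lt _ hm0)).1 _)
  have hAcj : ∀ j : ℕ, A (c j) = ((j.factorial : K))⁻¹ • (⇑A)^[j / m + 1] (yinit (j % m)) := by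
    intro j
    rw [hcj j, map_smul, ← Function.iterate_succ_apply' (⇑A)]
  -- boundedness of the root sequences
  have hbnd : ∀ k < m, Filter.IsBoundedUnder (· ≤ ·) atTop
      (fun n : ℕ => ‖(⇑A)^[n] (yinit k)‖ ^ (1 / (n : ℝ))) := by
    intro k hk
    obtain ⟨-, α, hα, C0, hC0, hb⟩ := hE k hk
    refine isBoundedUnder_of ⟨max 1 (max C0 1 * α), fun n => ?_⟩
    rcases Nat.eq_zero_or_pos n with hn | hn
    · subst hn
      have h0 : (1 / ((0 : ℕ) : ℝ)) = 0 := by norm_num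
      rw [h0, Real.rpow_zero]
      exact le_max_left 1 (max C0 1 * α)
    · have hnn : (n : ℝ) ≠ 0 := by positivity
      have h1 : ‖(⇑A)^[n] (yinit k)‖ ^ (1 / (n : ℝ)) ≤ (C0 * α ^ n) ^ (1 / (n : ℝ)) :=
        Real.rpow_le_rpow (norm_nonneg _) (hb n) (by positivity)
      have h2 : (C0 * α ^ n) ^ (1 / (n : ℝ)) = C0 ^ (1 / (n : ℝ)) * (α ^ n) ^ (1 / (n : ℝ)) :=
        Real.mul_rpow hC0.le (by positivity)
      have h3 : ((α : ℝ) ^ n) ^ (1 / (n : ℝ)) = α := by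
        rw [← Real.rpow_natCast α n, ← Real.rpow_mul hα.le, mul_one_div, div_self hnn,
          Real.rpow_one]
      have h4 : C0 ^ (1 / (n : ℝ)) ≤ max C0 1 := by
        rcases le_total C0 1 with h | h
        · calc C0 ^ (1 / (n : ℝ)) ≤ 1 ^ (1 / (n : ℝ)) :=
                Real.rpow_le_rpow hC0.le h (by positivity)
            _ = 1 := Real.one_rpow _
            _ ≤ max C0 1 := le_max_right _ _
        · calc C0 ^ (1 / (n : ℝ)) ≤ C0 ^ (1 : ℝ) := by
                apply Real.rpow_le_rpow_of_exponent_le h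
                rw [div_le_one (by positivity)]
                exact_mod_cast hn
            _ = C0 := Real.rpow_one _
            _ ≤ max C0 1 := le_max_left _ _
      calc ‖(⇑A)^[n] (yinit k)‖ ^ (1 / (n : ℝ)) ≤ C0 ^ (1 / (n : ℝ)) * α := by
            rw [← h3]; rw [h2] at h1; exact h1
        _ ≤ max C0 1 * α := mul_le_mul_of_nonneg_right h4 hα.le
        _ ≤ max 1 (max C0 1 * α) := le_max_right _ _
  have hσ0 : 0 ≤ σ := by
    rw [hσ]
    refine le_trans ?_ (Finset.le_sup'
      (f := fun k => Filter.limsup (fun n : ℕ => ‖(⇑A)^[n] (yinit k)‖ ^ (1 / (n : ℝ))) atTop)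
      (Finset.mem_range.mpr hm0))
    exact Filter.le_limsup_of_frequently_le
      (Frequently.of_forall fun n => Real.rpow_nonneg (norm_nonneg _) _) (hbnd 0 hm0)
  -- uniform growth bound for β > σ
  have hev : ∀ β : ℝ, σ < β → ∃ C : ℝ, 0 < C ∧
      ∀ n : ℕ, ∀ k < m, ‖(⇑A)^[n] (yinit k)‖ ≤ C * β ^ n := by
    intro β hβ
    have hβ0 : 0 < β := lt_of_le_of_lt hσ0 hβ
    have hevk : ∀ k ∈ Finset.range m, ∀ᶠ n : ℕ in atTop,
        ‖(⇑A)^[n] (yinit k)‖ ^ (1 / (n : ℝ)) < β := by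
      intro k hkr
      have hk := Finset.mem_range.mp hkr
      refine Filter.eventually_lt_of_limsup_lt ?_ (hbnd k hk)
      calc Filter.limsup (fun n : ℕ => ‖(⇑A)^[n] (yinit k)‖ ^ (1 / (n : ℝ))) atTop
          ≤ σ := by
            rw [hσ]
            exact Finset.le_sup'
              (f := fun k => Filter.limsup
                (fun n : ℕ => ‖(⇑A)^[n] (yinit k)‖ ^ (1 / (n : ℝ))) atTop) hkr
        _ < β := hβ
    have hev2 : ∀ᶠ n : ℕ in atTop, 1 ≤ n ∧ ∀ k ∈ Finset.range m,
        ‖(⇑A)^[n] (yinit k)‖ ^ (1 / (n : ℝ)) < β :=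
      (eventually_ge_atTop 1).and ((Finset.range m).eventually_all.mpr hevk)
    obtain ⟨N, hN⟩ := eventually_atTop.mp hev2
    refine ⟨1 + ∑ i ∈ Finset.range N, ∑ k ∈ Finset.range m,
      ‖(⇑A)^[i] (yinit k)‖ * (β⁻¹) ^ i, by positivity, ?_⟩
    intro n k hk
    set S := ∑ i ∈ Finset.range N, ∑ k ∈ Finset.range m, ‖(⇑A)^[i] (yinit k)‖ * (β⁻¹) ^ i with hS
    have hS0 : 0 ≤ S := by positivity
    rcases le_or_gt N n with h | h
    · obtain ⟨hn1, hall⟩ := hN n h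
      have hlt := hall k (Finset.mem_range.mpr hk)
      have hb : ‖(⇑A)^[n] (yinit k)‖ ≤ β ^ n := by
        have hroot : (‖(⇑A)^[n] (yinit k)‖ ^ (1 / (n : ℝ))) ^ n = ‖(⇑A)^[n] (yinit k)‖ := by
          rw [← Real.rpow_natCast (‖(⇑A)^[n] (yinit k)‖ ^ (1 / (n : ℝ))) n,
            ← Real.rpow_mul (norm_nonneg _), one_div,
            inv_mul_cancel₀ (Nat.cast_ne_zero.mpr (by omega) : (n : ℝ) ≠ 0),
            Real.rpow_one]
        calc ‖(⇑A)^[n] (yinit k)‖ = (‖(⇑A)^[n] (yinit k)‖ ^ (1 / (n : ℝ))) ^ n := hroot.symm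
          _ ≤ β ^ n := pow_le_pow_left₀ (Real.rpow_nonneg (norm_nonneg _) _) hlt.le n
      calc ‖(⇑A)^[n] (yinit k)‖ ≤ β ^ n := hb
        _ ≤ (1 + S) * β ^ n := le_mul_of_one_le_left (by positivity) (by linarith)
    · have hterm : ‖(⇑A)^[n] (yinit k)‖ * (β⁻¹) ^ n ≤ S := by
        calc ‖(⇑A)^[n] (yinit k)‖ * (β⁻¹) ^ n
            ≤ ∑ k' ∈ Finset.range m, ‖(⇑A)^[n] (yinit k')‖ * (β⁻¹) ^ n :=
              Finset.single_le_sum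
                (f := fun k' => ‖(⇑A)^[n] (yinit k')‖ * (β⁻¹) ^ n)
                (fun _ _ => by positivity) (Finset.mem_range.mpr hk)
          _ ≤ S :=
              Finset.single_le_sum
                (f := fun i => ∑ k' ∈ Finset.range m, ‖(⇑A)^[i] (yinit k')‖ * (β⁻¹) ^ i)
                (fun _ _ => by positivity) (Finset.mem_range.mpr h)
      have hrw : ‖(⇑A)^[n] (yinit k)‖ = (‖(⇑A)^[n] (yinit k)‖ * (β⁻¹) ^ n) * β ^ n := by
        rw [mul_assoc, ← mul_pow, inv_mul_cancel₀ hβ0.ne', one_pow, mul_one]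
      rw [hrw]
      apply mul_le_mul_of_nonneg_right _ (by positivity)
      linarith
  -- single-exponent bound: s^k ≤ max 1 (s^m) for k ≤ m
  have hkmax : ∀ s : ℝ, 0 ≤ s → ∀ k ≤ m, s ^ k ≤ max 1 (s ^ m) := by
    intro s hs k hkm
    rcases le_total s 1 with h | h
    · exact le_max_of_le_left (pow_le_one₀ hs h)
    · exact le_max_of_le_right (pow_le_pow_right₀ h hkm)
  -- master estimate
  have hgen : ∀ (C β : ℝ), 0 ≤ C → 0 ≤ β → ∀ v : ℕ → B,
      (∀ j : ℕ, ‖v j‖ ≤ C * β ^ (j / m)) → ∀ t : ℝ, 0 ≤ t → ∀ j : ℕ,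
      ‖((j.factorial : K))⁻¹ • v j‖ * t ^ j ≤
        (C * max 1 ((u * t) ^ m)) * ((u * t) ^ m * β) ^ (j / m) := by
    intro C β hC hβ v hv t ht j
    have hut : 0 ≤ u * t := by positivity
    have h1 : ‖((j.factorial : K))⁻¹ • v j‖ ≤ u ^ j * (C * β ^ (j / m)) := by
      rw [norm_smul]
      exact mul_le_mul (hfac j) (hv j) (norm_nonneg _) (by positivity)
    have h2 : ‖((j.factorial : K))⁻¹ • v j‖ * t ^ j ≤ (u ^ j * (C * β ^ (j / m))) * t ^ j :=
      mul_le_mul_of_nonneg_right h1 (by positivity)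
    have hj : (u * t) ^ j = ((u * t) ^ m) ^ (j / m) * (u * t) ^ (j % m) := by
      rw [← pow_mul, ← pow_add, Nat.div_add_mod]
    have h3 : (u ^ j * (C * β ^ (j / m))) * t ^ j
        = C * ((u * t) ^ (j % m) * (((u * t) ^ m) ^ (j / m) * β ^ (j / m))) := by
      rw [show u ^ j * (C * β ^ (j / m)) * t ^ j = C * ((u * t) ^ j * β ^ (j / m)) by
        rw [mul_pow]; ring, hj]
      ring
    rw [mul_pow ((u * t) ^ m) β]
    refine h2.trans ?_
    rw [h3]
    have h4 : (u * t) ^ (j % m) * (((u * t) ^ m) ^ (j / m) * β ^ (j / m))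
        ≤ max 1 ((u * t) ^ m) * (((u * t) ^ m) ^ (j / m) * β ^ (j / m)) :=
      mul_le_mul_of_nonneg_right (hkmax _ hut _ (Nat.mod_lt _ hm0).le) (by positivity)
    calc C * ((u * t) ^ (j % m) * (((u * t) ^ m) ^ (j / m) * β ^ (j / m)))
        ≤ C * (max 1 ((u * t) ^ m) * (((u * t) ^ m) ^ (j / m) * β ^ (j / m))) :=
          mul_le_mul_of_nonneg_left h4 hC
      _ = C * max 1 ((u * t) ^ m) * (((u * t) ^ m) ^ (j / m) * β ^ (j / m)) := by ring
  -- choice of β for admissible t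
  have hβt : ∀ t : ℝ, 0 < t → (u * t) ^ m * σ < 1 →
      ∃ β : ℝ, σ < β ∧ 0 < β ∧ (u * t) ^ m * β < 1 := by
    intro t ht htσ
    have hutpos : 0 < (u * t) ^ m := by positivity
    have hinvpos : 0 < ((u * t) ^ m)⁻¹ := inv_pos.mpr hutpos
    have hσlt : σ < ((u * t) ^ m)⁻¹ := by
      rw [← one_div, lt_div_iff₀ hutpos]
      linarith [htσ]
    refine ⟨(σ + ((u * t) ^ m)⁻¹) / 2, by linarith, by linarith, ?_⟩
    have hβlt : (σ + ((u * t) ^ m)⁻¹) / 2 < ((u * t) ^ m)⁻¹ := by linarith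
    calc (u * t) ^ m * ((σ + ((u * t) ^ m)⁻¹) / 2)
        < (u * t) ^ m * ((u * t) ^ m)⁻¹ := mul_lt_mul_of_pos_left hβlt hutpos
      _ = 1 := mul_inv_cancel₀ hutpos.ne'
  -- radius bound for admissible t
  have hrad : ∀ t : ℝ, 0 < t → (u * t) ^ m * σ < 1 →
      (t.toNNReal : ℝ≥0∞) ≤ (pser K c).radius := by
    intro t ht htσ
    obtain ⟨β, hσβ, hβ0, hq⟩ := hβt t ht htσ
    obtain ⟨C, hC, hCb⟩ := hev β hσβ
    have hv : ∀ j : ℕ, ‖(⇑A)^[j / m] (yinit (j % m))‖ ≤ C * β ^ (j / m) := fun j =>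
      hCb (j / m) (j % m) (Nat.mod_lt _ hm0)
    apply FormalMultilinearSeries.le_radius_of_bound _ (C * max 1 ((u * t) ^ m))
    intro n
    have h1 := hgen C β hC.le hβ0.le _ hv t ht.le n
    rw [pser_norm]
    rw [Real.coe_toNNReal _ ht.le]
    calc ‖c n‖ * t ^ n
        = ‖((n.factorial : K))⁻¹ • (⇑A)^[n / m] (yinit (n % m))‖ * t ^ n := by rw [← hcj n]
      _ ≤ (C * max 1 ((u * t) ^ m)) * ((u * t) ^ m * β) ^ (n / m) := h1
      _ ≤ (C * max 1 ((u * t) ^ m)) * 1 := by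
          apply mul_le_mul_of_nonneg_left _ (by positivity)
          exact pow_le_one₀ (by positivity) hq.le
      _ = C * max 1 ((u * t) ^ m) := mul_one _
  -- a universally admissible small t₀
  have ht0 : ∃ t : ℝ, 0 < t ∧ (u * t) ^ m * σ < 1 := by
    refine ⟨(u * (σ + 1))⁻¹, by positivity, ?_⟩
    have h1 : u * (u * (σ + 1))⁻¹ = (σ + 1)⁻¹ := by
      field_simp
    rw [h1]
    have h2 : (σ + 1 : ℝ) ≤ (σ + 1) ^ m := le_self_pow₀ (by linarith) (by omega)
    have h3 : ((σ + 1 : ℝ) ^ m)⁻¹ ≤ (σ + 1)⁻¹ := by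
      apply inv_anti₀ (by linarith) h2
    calc ((σ + 1 : ℝ)⁻¹) ^ m * σ = ((σ + 1 : ℝ) ^ m)⁻¹ * σ := by rw [inv_pow]
      _ ≤ (σ + 1)⁻¹ * σ := mul_le_mul_of_nonneg_right h3 hσ0
      _ < 1 := by
          rw [inv_mul_lt_iff₀ (by linarith)]
          linarith
  have hrad0 : 0 < (pser K c).radius := by
    obtain ⟨t, ht, htσ⟩ := ht0
    calc (0 : ℝ≥0∞) < (t.toNNReal : ℝ≥0∞) := by
          exact_mod_cast ENNReal.coe_pos.mpr (Real.toNNReal_pos.mpr ht)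
      _ ≤ (pser K c).radius := hrad t ht htσ
  -- y is the sum of the power series
  have hysum : y = (pser K c).sum := by
    funext w
    rw [hy w, FormalMultilinearSeries.sum]
    exact tsum_congr fun n => (pser_apply c n w).symm
  have hball : HasFPowerSeriesOnBall y (pser K c) 0 (pser K c).radius := by
    rw [hysum]
    exact (pser K c).hasFPowerSeriesOnBall hrad0
  have hiter := pser_iter_deriv hball m
  -- termwise identity:  (n+m).descFactorial m • c (n+m) = A (c n)
  have hterm : ∀ n : ℕ, ((n + m).descFactorial m) • c (n + m) = A (c n) := by
    intro n
    have h1 : c (n + m) = (((n + m).factorial : K))⁻¹ • (⇑A)^[n / m + 1] (yinit (n % m)) := by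
      have h := hcj (n + m)
      rwa [Nat.add_div_right _ hm0, Nat.add_mod_right] at h
    have h2 : A (c n) = ((n.factorial : K))⁻¹ • (⇑A)^[n / m + 1] (yinit (n % m)) := hAcj n
    rw [h1, h2, ← Nat.cast_smul_eq_nsmul K, smul_smul]
    congr 1
    have hdne : ((n + m).descFactorial m : ℕ) ≠ 0 := by
      rw [Ne, Nat.descFactorial_eq_zero_iff_lt]
      omega
    have hd : (n.factorial : K) * ((n + m).descFactorial m : K) = ((n + m).factorial : K) := by
      have h3 := Nat.factorial_mul_descFactorial (show m ≤ n + m by omega)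
      rw [Nat.add_sub_cancel] at h3
      exact_mod_cast h3
    have hf1 : ((n + m).factorial : K) ≠ 0 := Nat.cast_ne_zero.mpr (Nat.factorial_ne_zero _)
    have hf2 : ((n.factorial : K)) ≠ 0 := Nat.cast_ne_zero.mpr (Nat.factorial_ne_zero _)
    field_simp
    rw [mul_comm]
    exact hd
-- main per-point statement
  have KEY : ∀ t : ℝ, 0 < t → (u * t) ^ m * σ < 1 → ∀ z : K, ‖z‖ < t →
      Summable (fun j : ℕ => z ^ j • c j) ∧
      (∀ k < m, Summable (fun n : ℕ =>
        ((m * n + k).factorial : K)⁻¹ • z ^ (m * n + k) • (⇑A)^[n] (yinit k))) ∧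
      y z ∈ D ∧
      iteratedDeriv m y z = A (y z) := by
    intro t ht htσ z hzt
    have hzrad : (‖z‖₊ : ℝ≥0∞) < (pser K c).radius := by
      refine lt_of_lt_of_le ?_ (hrad t ht htσ)
      have h1 : ‖z‖₊ < t.toNNReal := by
        rw [← norm_toNNReal]
        exact (Real.toNNReal_lt_toNNReal_iff ht).mpr hzt
      exact_mod_cast ENNReal.coe_lt_coe.mpr h1
    have hS : HasSum (fun j : ℕ => z ^ j • c j) (y z) := pser_hasSum hball hzrad
    have hiterS : HasSum (fun n : ℕ => z ^ n • ((n + m).descFactorial m • c (n + m)))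
        (deriv^[m] y z) := pser_hasSum hiter hzrad
    have hiterS' : HasSum (fun n : ℕ => z ^ n • A (c n)) (deriv^[m] y z) := by
      simpa only [hterm] using hiterS
    have htend : Tendsto (fun N : ℕ => ((∑ j ∈ Finset.range N, z ^ j • c j,
        ∑ j ∈ Finset.range N, z ^ j • A (c j)) : B × B)) atTop
        (𝓝 (y z, deriv^[m] y z)) :=
      (hS.tendsto_sum_nat).prodMk_nhds (hiterS'.tendsto_sum_nat)
    have hmemN : ∀ N : ℕ, ((∑ j ∈ Finset.range N, z ^ j • c j,
        ∑ j ∈ Finset.range N, z ^ j • A (c j)) : B × B)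
        ∈ {q : B × B | q.1 ∈ D ∧ A q.1 = q.2} := by
      intro N
      refine ⟨?_, ?_⟩
      · show (∑ j ∈ Finset.range N, z ^ j • c j) ∈ D
        exact Submodule.sum_mem D fun j _ => D.smul_mem _ (hcD j)
      · show A (∑ j ∈ Finset.range N, z ^ j • c j) = ∑ j ∈ Finset.range N, z ^ j • A (c j)
        rw [map_sum]
        exact Finset.sum_congr rfl fun j _ => map_smul A _ _
    have hmem := hA.mem_of_tendsto htend (Filter.Eventually.of_forall hmemN)
    obtain ⟨hmemD, hAeq⟩ := hmem
    refine ⟨hS.summable, ?_, hmemD, ?_⟩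
    · intro k hk
      have hinj : Function.Injective (fun n : ℕ => m * n + k) := by
        intro a b hab
        have h := Nat.add_right_cancel hab
        exact Nat.eq_of_mul_eq_mul_left hm0 h
      have hcomp := hS.summable.comp_injective hinj
      refine hcomp.congr fun n => ?_
      show z ^ (m * n + k) • c (m * n + k) = _
      rw [hc n k hk]
      exact smul_comm _ _ _
    · rw [iteratedDeriv_eq_iterate]
      exact hAeq.symm
  constructor
  · -- disk statement
    intro z hz
    by_cases hσe : σ = 0
    · refine KEY (‖z‖ + 1) (by positivity) ?_ z (lt_add_one _)
      rw [hσe, mul_zero]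
      norm_num
    · have hσpos : 0 < σ := lt_of_le_of_ne hσ0 (Ne.symm hσe)
      have hzR := hz.resolve_left hσe
      set R := σ ^ (-(1 : ℝ) / (m : ℝ)) * (p : ℝ) ^ (-(1 : ℝ) / ((p : ℝ) - 1)) with hR
      have htpos : 0 < (‖z‖ + R) / 2 := by
        have := norm_nonneg z
        linarith
      refine KEY ((‖z‖ + R) / 2) htpos ?_ z (by linarith)
      have ht2 : (‖z‖ + R) / 2 < R := by linarith
      have hup : u * (p : ℝ) ^ (-(1 : ℝ) / ((p : ℝ) - 1)) = 1 := by
        rw [hu_def, ← Real.rpow_add hppos]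
        rw [show (1 : ℝ) / ((p : ℝ) - 1) + (-(1 : ℝ)) / ((p : ℝ) - 1) = 0 by ring,
          Real.rpow_zero]
      have huR : u * R = σ ^ (-(1 : ℝ) / (m : ℝ)) := by
        rw [hR]
        calc u * (σ ^ (-(1 : ℝ) / (m : ℝ)) * (p : ℝ) ^ (-(1 : ℝ) / ((p : ℝ) - 1)))
            = (u * (p : ℝ) ^ (-(1 : ℝ) / ((p : ℝ) - 1))) * σ ^ (-(1 : ℝ) / (m : ℝ)) := by
              ring
          _ = σ ^ (-(1 : ℝ) / (m : ℝ)) := by rw [hup, one_mul]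
      have hut : u * ((‖z‖ + R) / 2) < σ ^ (-(1 : ℝ) / (m : ℝ)) := by
        rw [← huR]
        exact mul_lt_mul_of_pos_left ht2 hu0
      have hσm : (σ ^ (-(1 : ℝ) / (m : ℝ))) ^ m = σ⁻¹ := by
        rw [← Real.rpow_natCast (σ ^ (-(1 : ℝ) / (m : ℝ))) m, ← Real.rpow_mul hσ0,
          show (-(1 : ℝ) / (m : ℝ)) * (m : ℝ) = -1 by
            field_simp]
        exact Real.rpow_neg_one σ
      have h5 : (u * ((‖z‖ + R) / 2)) ^ m < σ⁻¹ := by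
        rw [← hσm]
        exact pow_lt_pow_left₀ hut (mul_nonneg hu0.le htpos.le) (by omega)
      calc (u * ((‖z‖ + R) / 2)) ^ m * σ < σ⁻¹ * σ := mul_lt_mul_of_pos_right h5 hσpos
        _ = 1 := inv_mul_cancel₀ hσpos.ne'
  · -- initial conditions
    intro k hk
    have h1 := hball.factorial_smul (1 : K) k
    rw [iteratedDeriv_eq_iteratedFDeriv, ← h1, pser_apply, one_pow, one_smul]
    have h2 : c k = ((k.factorial : K))⁻¹ • yinit k := by
      have h3 := hc 0 k hk
      simpa using h3
    rw [h2, ← Nat.cast_smul_eq_nsmul K, smul_smul,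
      mul_inv_cancel₀ (Nat.cast_ne_zero.mpr (Nat.factorial_ne_zero k) : ((k.factorial : K)) ≠ 0),
      one_smul]
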